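/- Let F be a field of characteristic zero, n₁, n₂ ≥ 1 integers, A₁ an n₁×n₁ matrix and A₂ an n₂×n₂ matrix over F, b₁ ∈ F^{n₁}, b₂ ∈ F^{n₂} column vectors and c₁ ∈ F^{n₁}, c₂ ∈ F^{n₂} row vectors. Let n = n₁+n₂, A the block-diagonal matrix with blocks A₁ and A₂, b the concatenation of b₁ and b₂, and c the concatenation of c₁ and c₂. Then d_n(A,b,c) = det(χ_{A₁}(A₂))² · d_{n₁}(A₁,b₁,c₁) · d_{n₂}(A₂,b₂,c₂), where χ_{A₁}(A₂) is the evaluation of the characteristic polynomial of A₁ at the matrix A₂. -/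

import Mathlib

open Matrix Polynomial Finset

section Aux

variable {F : Type*} [CommRing F]

lemma aeval_transpose' {n : Type*} [Fintype n] [DecidableEq n]
    (A : Matrix n n F) (p : F[X]) :
    Polynomial.aeval Aᵀ p = (Polynomial.aeval A p)ᵀ := by
  rw [Polynomial.aeval_eq_sum_range (x := Aᵀ), Polynomial.aeval_eq_sum_range (x := A)]
  rw [Matrix.transpose_sum]
  exact Finset.sum_congr rfl fun k _ => by rw [Matrix.transpose_smul, Matrix.transpose_pow]

lemma charpoly_transpose' {n : Type*} [Fintype n] [DecidableEq n]
    (A : Matrix n n F) : Aᵀ.charpoly = A.charpoly := by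
  rw [Matrix.charpoly, Matrix.charpoly, ← Matrix.det_transpose (Matrix.charmatrix A)]
  congr 1
  ext i j
  by_cases h : i = j
  · subst h; simp
  · rw [Matrix.transpose_apply, Matrix.charmatrix_apply_ne _ _ _ h,
      Matrix.charmatrix_apply_ne _ _ _ (Ne.symm h), Matrix.transpose_apply]

lemma dot_pow {N : ℕ} (M : Matrix (Fin N) (Fin N) F) (c b : Fin N → F) (a k : ℕ) :
    (∑ w, Matrix.vecMul c (M ^ a) w * Matrix.mulVec (M ^ k) b w) =
      dotProduct c (Matrix.mulVec (M ^ (a + k)) b) := by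
  rw [pow_add, ← Matrix.mulVec_mulVec, Matrix.dotProduct_mulVec]
  rfl

lemma key_sum {n₁ n₂ : ℕ} (p : F[X]) (hdeg : p.natDegree = n₁)
    (t : Fin n₂) (g : ℕ → F) :
    ((∑ i : Fin n₁, (if (t : ℕ) ≤ (i : ℕ) then p.coeff ((i : ℕ) - t) else 0) * g i) +
      ∑ u : Fin n₂, (if (t : ℕ) ≤ n₁ + (u : ℕ) then p.coeff (n₁ + (u : ℕ) - t) else 0)
        * g (n₁ + u)) =
    ∑ k ∈ Finset.range (n₁ + 1), p.coeff k * g ((t : ℕ) + k) := by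
  set f : ℕ → F := fun m => (if (t : ℕ) ≤ m then p.coeff (m - t) else 0) * g m with hf
  have h1 : (∑ i : Fin n₁, (if (t : ℕ) ≤ (i : ℕ) then p.coeff ((i : ℕ) - t) else 0) * g i)
      = ∑ m ∈ Finset.range n₁, f m := by
    rw [Finset.sum_range]
  have h2 : (∑ u : Fin n₂, (if (t : ℕ) ≤ n₁ + (u : ℕ) then p.coeff (n₁ + (u : ℕ) - t) else 0)
      * g (n₁ + u)) = ∑ m ∈ Finset.range n₂, f (n₁ + m) := by
    rw [Finset.sum_range]
  have h3 : (∑ m ∈ Finset.range n₂, f (n₁ + m)) = ∑ m ∈ Finset.Ico n₁ (n₁ + n₂), f m := by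
    rw [Finset.sum_Ico_eq_sum_range]
    simp
  rw [h1, h2, h3, Finset.range_eq_Ico,
    Finset.sum_Ico_consecutive _ (Nat.zero_le _) (Nat.le_add_right _ _), ← Finset.range_eq_Ico]
  have himg : ∑ k ∈ Finset.range (n₁ + 1), p.coeff k * g ((t : ℕ) + k)
      = ∑ m ∈ (Finset.range (n₁ + 1)).image ((t : ℕ) + ·), f m := by
    rw [Finset.sum_image (by intro a _ b _ h; simp only at h; omega)]
    refine Finset.sum_congr rfl fun k _ => ?_
    simp [hf, Nat.add_sub_cancel_left]
  rw [himg]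
  apply (Finset.sum_subset ?_ ?_).symm
  · intro m hm
    simp only [Finset.mem_image, Finset.mem_range] at hm ⊢
    obtain ⟨k, hk, rfl⟩ := hm
    omega
  · intro m _ hnot
    simp only [Finset.mem_image, Finset.mem_range, not_exists] at hnot
    push_neg at hnot
    by_cases hmt : (t : ℕ) ≤ m
    · by_cases hk : m - (t : ℕ) ≤ n₁
      · exact absurd (by omega : (t : ℕ) + (m - (t : ℕ)) = m)
          (hnot _ (by omega))
      · simp only [hf, if_pos hmt]
        rw [Polynomial.coeff_eq_zero_of_natDegree_lt (by omega), zero_mul]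
    · simp [hf, if_neg hmt]

lemma sum_coeff_vecMul {N n₁ : ℕ} (p : F[X]) (hdeg : p.natDegree = n₁)
    (M : Matrix (Fin N) (Fin N) F) (c : Fin N → F) (t : ℕ) (j : Fin N) :
    (∑ k ∈ Finset.range (n₁ + 1), p.coeff k * Matrix.vecMul c (M ^ (t + k)) j) =
      Matrix.vecMul c (M ^ t * Polynomial.aeval M p) j := by
  have h : M ^ t * Polynomial.aeval M p = ∑ k ∈ Finset.range (n₁ + 1), p.coeff k • M ^ (t + k) := by
    rw [Polynomial.aeval_eq_sum_range' (n := n₁ + 1) (by omega), Finset.mul_sum]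
    exact Finset.sum_congr rfl fun k _ => by rw [mul_smul_comm, pow_add]
  rw [h]
  simp only [Matrix.vecMul, dotProduct, Matrix.sum_apply, Matrix.smul_apply, smul_eq_mul,
    Finset.mul_sum]
  rw [Finset.sum_comm]
  refine Finset.sum_congr rfl fun k _ => Finset.sum_congr rfl fun w _ => by ring

/-- exponent attached to each index of `Fin n₁ ⊕ Fin n₂`. -/
def sidx (n₁ : ℕ) {n₂ : ℕ} : Fin n₁ ⊕ Fin n₂ → ℕ := Sum.elim Fin.val fun t => n₁ + t.val

lemma obs_det [Nontrivial F] {n₁ n₂ : ℕ}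
    (A₁ : Matrix (Fin n₁) (Fin n₁) F) (A₂ : Matrix (Fin n₂) (Fin n₂) F)
    (c₁ : Fin n₁ → F) (c₂ : Fin n₂ → F) :
    (Matrix.of fun s j : Fin n₁ ⊕ Fin n₂ =>
        Sum.elim (Matrix.vecMul c₁ (A₁ ^ sidx n₁ s)) (Matrix.vecMul c₂ (A₂ ^ sidx n₁ s)) j).det
    = (Polynomial.aeval A₂ A₁.charpoly).det
      * (Matrix.of fun i j : Fin n₁ => Matrix.vecMul c₁ (A₁ ^ (i : ℕ)) j).det
      * (Matrix.of fun t u : Fin n₂ => Matrix.vecMul c₂ (A₂ ^ (t : ℕ)) u).det := by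
  set p := A₁.charpoly with hp
  have hdeg : p.natDegree = n₁ := by
    rw [hp, Matrix.charpoly_natDegree_eq_dim, Fintype.card_fin]
  set Ob : Matrix (Fin n₁ ⊕ Fin n₂) (Fin n₁ ⊕ Fin n₂) F :=
    Matrix.of fun s j =>
      Sum.elim (Matrix.vecMul c₁ (A₁ ^ sidx n₁ s)) (Matrix.vecMul c₂ (A₂ ^ sidx n₁ s)) j with hOb
  set O₁ : Matrix (Fin n₁) (Fin n₁) F :=
    Matrix.of fun i j => Matrix.vecMul c₁ (A₁ ^ (i : ℕ)) j with hO₁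
  set O₂ : Matrix (Fin n₂) (Fin n₂) F :=
    Matrix.of fun t u => Matrix.vecMul c₂ (A₂ ^ (t : ℕ)) u with hO₂
  set Y : Matrix (Fin n₁) (Fin n₂) F :=
    Matrix.of fun i u => Matrix.vecMul c₂ (A₂ ^ (i : ℕ)) u with hY
  set B : Matrix (Fin n₂) (Fin n₁) F :=
    Matrix.of fun t i => if (t : ℕ) ≤ (i : ℕ) then p.coeff ((i : ℕ) - t) else 0 with hB
  set Cm : Matrix (Fin n₂) (Fin n₂) F :=
    Matrix.of fun t u => if (t : ℕ) ≤ n₁ + (u : ℕ) then p.coeff (n₁ + (u : ℕ) - t) else 0 with hCm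
  set L : Matrix (Fin n₁ ⊕ Fin n₂) (Fin n₁ ⊕ Fin n₂) F :=
    Matrix.fromBlocks 1 0 B Cm with hL
  have hCdet : Cm.det = 1 := by
    rw [Matrix.det_of_lowerTriangular Cm ?htri]
    · refine Finset.prod_eq_one fun t _ => ?_
      simp only [hCm, Matrix.of_apply, if_pos (Nat.le_add_right _ _), Nat.add_sub_cancel]
      have h1 := Polynomial.Monic.coeff_natDegree (Matrix.charpoly_monic A₁)
      rw [← hp, hdeg] at h1
      rw [if_pos (Nat.le_add_left _ _)]; exact h1
    case htri =>
      intro i j hij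
      have hij' : (i : ℕ) < (j : ℕ) := hij
      simp only [hCm, Matrix.of_apply]
      rw [if_pos (by omega), Polynomial.coeff_eq_zero_of_natDegree_lt (by omega)]
  have hLdet : L.det = 1 := by
    rw [hL, Matrix.det_fromBlocks_zero₁₂, Matrix.det_one, hCdet, mul_one]
  have hLO : L * Ob = Matrix.fromBlocks O₁ Y 0 (O₂ * Polynomial.aeval A₂ p) := by
    ext s j
    rw [Matrix.mul_apply, Fintype.sum_sum_type]
    cases s with
    | inl i =>
      cases j with
      | inl j =>
        simp [hL, hOb, hO₁, Matrix.one_apply, sidx, Finset.sum_ite_eq, ite_mul]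
      | inr u =>
        simp [hL, hOb, hY, Matrix.one_apply, sidx, Finset.sum_ite_eq, ite_mul]
    | inr t =>
      cases j with
      | inl j =>
        have := key_sum (n₂ := n₂) p hdeg t (fun m => Matrix.vecMul c₁ (A₁ ^ m) j)
        simp only [hL, hOb, hB, hCm, Matrix.fromBlocks_apply₂₁, Matrix.fromBlocks_apply₂₂,
          Matrix.of_apply, Sum.elim_inl, Sum.elim_inr, sidx, Matrix.zero_apply, Pi.zero_apply]
        rw [this, sum_coeff_vecMul p hdeg, hp, Matrix.aeval_self_charpoly, mul_zero,
          Matrix.vecMul_zero]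
        rfl
      | inr u =>
        have := key_sum (n₂ := n₂) p hdeg t (fun m => Matrix.vecMul c₂ (A₂ ^ m) u)
        simp only [hL, hOb, hB, hCm, Matrix.fromBlocks_apply₂₁, Matrix.fromBlocks_apply₂₂,
          Matrix.of_apply, Sum.elim_inl, Sum.elim_inr, sidx]
        rw [this, sum_coeff_vecMul p hdeg, ← Matrix.vecMul_vecMul]
        simp [Matrix.mul_apply, Matrix.vecMul, dotProduct, hO₂]
  have hdet : Ob.det = (L * Ob).det := by rw [Matrix.det_mul, hLdet, one_mul]
  rw [hdet, hLO, Matrix.det_fromBlocks_zero₂₁, Matrix.det_mul]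
  ring

end Aux

/-- The invariant `d_r(A, b, c)` of a square matrix `A`, a column vector `b` and a row
vector `c` : the determinant of the `r × r` matrix whose `(i,j)` entry is the scalar
`c · A^{i+j} · b`, `0 ≤ i, j ≤ r - 1`. By convention `d_0 = 1`. -/
def dMat {F : Type*} [CommRing F] {ι : Type*} [Fintype ι] [DecidableEq ι]
    (A : Matrix ι ι F) (b c : ι → F) (r : ℕ) : F :=
  (Matrix.of fun i j : Fin r =>
      dotProduct c (Matrix.mulVec (A ^ ((i : ℕ) + (j : ℕ))) b)).det

lemma dMat_factor {F : Type*} [CommRing F] {N : ℕ} (M : Matrix (Fin N) (Fin N) F)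
    (b c : Fin N → F) :
    dMat M b c N = (Matrix.of fun i j : Fin N => Matrix.vecMul c (M ^ (i : ℕ)) j).det *
      (Matrix.of fun i j : Fin N => Matrix.vecMul b (Mᵀ ^ (i : ℕ)) j).det := by
  have h : (Matrix.of fun i j : Fin N =>
        dotProduct c (Matrix.mulVec (M ^ ((i : ℕ) + (j : ℕ))) b))
      = (Matrix.of fun i j : Fin N => Matrix.vecMul c (M ^ (i : ℕ)) j) *
        (Matrix.of fun i j : Fin N => Matrix.vecMul b (Mᵀ ^ (i : ℕ)) j)ᵀ := by
    ext i j
    rw [Matrix.mul_apply]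
    simp only [Matrix.of_apply, Matrix.transpose_apply]
    rw [← dot_pow M c b (i : ℕ) (j : ℕ)]
    refine Finset.sum_congr rfl fun w _ => ?_
    rw [← Matrix.transpose_pow, Matrix.vecMul_transpose]
  rw [dMat, h, Matrix.det_mul, Matrix.det_transpose]

/-- For the block-diagonal matrix `A = diag(A₁, A₂)`, `b` the concatenation
of `b₁, b₂` and `c` the concatenation of `c₁, c₂`, with `n = n₁ + n₂`, one has
`d_n(A,b,c) = det(χ_{A₁}(A₂))² · d_{n₁}(A₁,b₁,c₁) · d_{n₂}(A₂,b₂,c₂)`. -/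
theorem stmt_3 (F : Type*) [Field F] [CharZero F]
    (n₁ n₂ : ℕ) (h₁ : 1 ≤ n₁) (h₂ : 1 ≤ n₂)
    (A₁ : Matrix (Fin n₁) (Fin n₁) F) (A₂ : Matrix (Fin n₂) (Fin n₂) F)
    (b₁ c₁ : Fin n₁ → F) (b₂ c₂ : Fin n₂ → F) :
    dMat (Matrix.fromBlocks A₁ 0 0 A₂) (Sum.elim b₁ b₂) (Sum.elim c₁ c₂) (n₁ + n₂) =
      (Polynomial.aeval A₂ A₁.charpoly).det ^ 2 * dMat A₁ b₁ c₁ n₁ * dMat A₂ b₂ c₂ n₂ := by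
  set e : Fin n₁ ⊕ Fin n₂ ≃ Fin (n₁ + n₂) := finSumFinEquiv with he
  set Ob : Matrix (Fin n₁ ⊕ Fin n₂) (Fin n₁ ⊕ Fin n₂) F :=
    Matrix.of fun s j =>
      Sum.elim (Matrix.vecMul c₁ (A₁ ^ sidx n₁ s)) (Matrix.vecMul c₂ (A₂ ^ sidx n₁ s)) j with hOb
  set Kb : Matrix (Fin n₁ ⊕ Fin n₂) (Fin n₁ ⊕ Fin n₂) F :=
    Matrix.of fun w s =>
      Sum.elim (Matrix.mulVec (A₁ ^ sidx n₁ s) b₁) (Matrix.mulVec (A₂ ^ sidx n₁ s) b₂) w with hKb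
  have hpow : ∀ m : ℕ, (Matrix.fromBlocks A₁ 0 0 A₂) ^ m
      = Matrix.fromBlocks (A₁ ^ m) 0 0 (A₂ ^ m) := by
    intro m
    induction m with
    | zero => simp [Matrix.fromBlocks_one]
    | succ m ih => rw [pow_succ, pow_succ, pow_succ, ih, Matrix.fromBlocks_multiply]; simp
  have hsidx : ∀ s : Fin n₁ ⊕ Fin n₂, sidx n₁ s = ((e s : Fin (n₁ + n₂)) : ℕ) := by
    intro s; cases s <;> simp [sidx, he]
  -- The big Hankel matrix equals the reindexed product Ob * Kb
  have hH : dMat (Matrix.fromBlocks A₁ 0 0 A₂) (Sum.elim b₁ b₂) (Sum.elim c₁ c₂) (n₁ + n₂)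
      = ((Ob * Kb).submatrix e.symm e.symm).det := by
    rw [dMat]
    congr 1
    ext i j
    rw [Matrix.submatrix_apply, Matrix.mul_apply, Fintype.sum_sum_type]
    simp only [hOb, hKb, Matrix.of_apply, Sum.elim_inl, Sum.elim_inr]
    rw [dot_pow, dot_pow, hsidx, hsidx, Equiv.apply_symm_apply, Equiv.apply_symm_apply]
    rw [hpow, Matrix.fromBlocks_mulVec, Matrix.zero_mulVec, Matrix.zero_mulVec,
      add_zero, zero_add, sumElim_dotProduct_sumElim]
    simp [Sum.elim_comp_inl, Sum.elim_comp_inr]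
  have hKbT : Kbᵀ = Matrix.of fun s w =>
      Sum.elim (Matrix.vecMul b₁ (A₁ᵀ ^ sidx n₁ s)) (Matrix.vecMul b₂ (A₂ᵀ ^ sidx n₁ s)) w := by
    ext s w
    cases w <;>
      simp [hKb, Matrix.transpose_apply, ← Matrix.transpose_pow, Matrix.vecMul_transpose]
  have hdetKb : Kb.det = (Polynomial.aeval A₂ A₁.charpoly).det
      * (Matrix.of fun i j : Fin n₁ => Matrix.vecMul b₁ (A₁ᵀ ^ (i : ℕ)) j).det
      * (Matrix.of fun t u : Fin n₂ => Matrix.vecMul b₂ (A₂ᵀ ^ (t : ℕ)) u).det := by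
    rw [← Matrix.det_transpose Kb, hKbT, obs_det A₁ᵀ A₂ᵀ b₁ b₂, charpoly_transpose',
      aeval_transpose', Matrix.det_transpose]
  rw [hH, Matrix.det_submatrix_equiv_self, Matrix.det_mul, obs_det A₁ A₂ c₁ c₂, hdetKb,
    dMat_factor A₁ b₁ c₁, dMat_factor A₂ b₂ c₂]
  ring
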